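/- For every integer n ≥ 3 with n ≠ 8 and n ≠ 9, the set of k = (k₁, …, k_{n−1}) ∈ ℤ^{n−1} with n·(k₁² + ⋯ + k_{n−1}²) − (k₁ + ⋯ + k_{n−1})² = 2n has exactly n(n−1) elements; for n = 8 and for n = 9 this set has strictly more than n(n−1) elements. -/

import Mathlib

open Finset
lemma sum_sub_sq {M : ℕ} (K : Fin M → ℤ) :
    ∑ i, ∑ j, (K i - K j)^2 = 2*M*(∑ i, (K i)^2) - 2*(∑ i, K i)^2 := by
  have h : ∀ i j : Fin M, (K i - K j)^2 = (K i)^2 + (K j)^2 - 2*(K i * K j) := by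
    intro i j; ring
  simp_rw [h, Finset.sum_sub_distrib, Finset.sum_add_distrib, Finset.sum_const,
    Finset.card_univ, Fintype.card_fin, ← Finset.mul_sum, nsmul_eq_mul]
  rw [← Finset.sum_mul, ← Finset.mul_sum]
  ring
open Finset

lemma spread {M : ℕ} (hM : 0 < M) (K : Fin M → ℤ)
    (hK : ∑ i, ∑ j, (K i - K j)^2 = 4*M) :
    ∃ m : ℤ, ∀ i, m ≤ K i ∧ K i ≤ m + 2 := by
  have hne : (Finset.univ : Finset (Fin M)).Nonempty := by have : Nonempty (Fin M) := ⟨⟨0, hM⟩⟩; exact Finset.univ_nonempty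
  obtain ⟨a, -, ha⟩ := Finset.exists_max_image Finset.univ K hne
  obtain ⟨b, -, hb⟩ := Finset.exists_min_image Finset.univ K hne
  refine ⟨K b, fun i => ⟨hb i (Finset.mem_univ i), ?_⟩⟩
  have hab : K b ≤ K a := hb a (Finset.mem_univ a)
  by_cases heq : K a = K b
  · have := hb i (Finset.mem_univ i); have := ha i (Finset.mem_univ i); omega
  have hne2 : a ≠ b := fun h => heq (h ▸ rfl)
  -- for each i, (Ka - Kb)^2 ≤ 2*((K i - K a)^2 + (K i - K b)^2) ≤ 2 * ∑ j, (K i - K j)^2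
  have key : ∀ i : Fin M, (K a - K b)^2 ≤ 2 * ∑ j, (K i - K j)^2 := by
    intro i
    have h1 : (K i - K a)^2 + (K i - K b)^2 ≤ ∑ j, (K i - K j)^2 := by
      have : ∑ j ∈ ({a, b} : Finset (Fin M)), (K i - K j)^2 ≤ ∑ j, (K i - K j)^2 :=
        Finset.sum_le_sum_of_subset_of_nonneg (Finset.subset_univ _)
          (fun j _ _ => sq_nonneg _)
      rwa [Finset.sum_pair hne2] at this
    nlinarith [sq_nonneg (K i - K a + (K i - K b)), sq_nonneg (2 * K i - K a - K b)]
  have htot : (M : ℤ) * (K a - K b)^2 ≤ 2 * (4 * M) := by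
    calc (M : ℤ) * (K a - K b)^2 = ∑ _i : Fin M, (K a - K b)^2 := by
          rw [Finset.sum_const, Finset.card_univ, Fintype.card_fin, nsmul_eq_mul]
      _ ≤ ∑ i, 2 * ∑ j, (K i - K j)^2 := Finset.sum_le_sum (fun i _ => key i)
      _ = 2 * (4 * M) := by rw [← Finset.mul_sum, hK]
  have hd : (K a - K b)^2 ≤ 8 := by
    by_contra h
    push_neg at h
    have : (M : ℤ) * 9 ≤ (M:ℤ) * (K a - K b)^2 := by
      have : (9:ℤ) ≤ (K a - K b)^2 := h
      exact mul_le_mul_of_nonneg_left this (by positivity)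
    omega
  have := ha i (Finset.mem_univ i)
  nlinarith [hab]
open Finset

lemma sum_eq {M : ℕ} (K : Fin M → ℤ) (m : ℤ) (hw : ∀ i, m ≤ K i ∧ K i ≤ m + 2) :
    (∑ i, K i) = M * m + (univ.filter fun i => K i = m+1).card
      + 2 * (univ.filter fun i => K i = m+2).card ∧
    (∑ i, (K i)^2) = M * m^2 + (2*m+1) * (univ.filter fun i => K i = m+1).card
      + (4*m+4) * (univ.filter fun i => K i = m+2).card := by
  have h1 : ∀ i : Fin M, K i = m + (if K i = m+1 then 1 else 0) + 2*(if K i = m+2 then 1 else 0) := by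
    intro i
    have := hw i
    split_ifs <;> omega
  have h2 : ∀ i : Fin M, (K i)^2 = m^2 + (2*m+1)*(if K i = m+1 then 1 else 0)
      + (4*m+4)*(if K i = m+2 then 1 else 0) := by
    intro i
    have h := hw i
    have : K i = m ∨ K i = m+1 ∨ K i = m+2 := by omega
    rcases this with h | h | h <;> rw [h] <;> split_ifs <;> (first | ring1 | (exfalso; omega))
  constructor
  · calc (∑ i, K i) = ∑ i, (m + (if K i = m+1 then 1 else 0) + 2*(if K i = m+2 then 1 else 0)) :=
        Finset.sum_congr rfl (fun i _ => h1 i)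
    _ = M * m + (univ.filter fun i => K i = m+1).card + 2 * (univ.filter fun i => K i = m+2).card := by
        rw [Finset.sum_add_distrib, Finset.sum_add_distrib, Finset.sum_const, ← Finset.mul_sum,
          Finset.sum_boole, Finset.sum_boole, Finset.card_univ, Fintype.card_fin, nsmul_eq_mul]
  · calc (∑ i, (K i)^2) = ∑ i, (m^2 + (2*m+1)*(if K i = m+1 then 1 else 0) + (4*m+4)*(if K i = m+2 then 1 else 0)) :=
        Finset.sum_congr rfl (fun i _ => h2 i)
    _ = _ := by
        rw [Finset.sum_add_distrib, Finset.sum_add_distrib, Finset.sum_const, ← Finset.mul_sum,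
          ← Finset.mul_sum, Finset.sum_boole, Finset.sum_boole, Finset.card_univ,
          Fintype.card_fin, nsmul_eq_mul]

lemma factor4 (p q M : ℤ) (hp : 0 ≤ p) (hq : 0 ≤ q) (hM : p + q = M)
    (h : (p - 2) * (q - 2) = 4) : M = 8 ∨ M = 9 ∨ M = 0 := by
  have hx4 : p - 2 ≤ 4 := Int.le_of_dvd (by norm_num) ⟨q - 2, h.symm⟩
  have hx0 : p - 2 ≠ 0 := by rintro h0; rw [h0] at h; simp at h
  have : p - 2 = -2 ∨ p - 2 = -1 ∨ p - 2 = 1 ∨ p - 2 = 2 ∨ p - 2 = 3 ∨ p - 2 = 4 := by omega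
  rcases this with h0 | h0 | h0 | h0 | h0 | h0 <;> rw [h0] at h <;> omega

lemma dioph (M q r : ℤ) (hM : 3 ≤ M) (h8 : M ≠ 8) (h9 : M ≠ 9)
    (hq : 0 ≤ q) (hr : 0 ≤ r) (hqr : q + r ≤ M)
    (heq : M*q + 4*M*r - (q+2*r)^2 = 2*M) : q = M - 2 ∧ r = 1 := by
  obtain ⟨p, hp0, hM'⟩ : ∃ p : ℤ, 0 ≤ p ∧ M = p + q + r := ⟨M - q - r, by omega, by omega⟩
  have heq' : p*q + q*r + 4*(p*r) = 2*(p+q+r) := by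
    rw [hM'] at heq; linear_combination heq
  by_cases hr0 : r = 0
  · exfalso
    subst hr0
    have h4 : (p - 2) * (q - 2) = 4 := by linear_combination heq'
    have := factor4 p q M hp0 hq (by omega) h4
    omega
  by_cases hq0 : q = 0
  · exfalso
    subst hq0
    have h2 : 4*(p*r) = 2*(p + r) := by linear_combination heq'
    by_cases hP : p = 0
    · subst hP; simp at h2; omega
    · have hp1 : 1 ≤ p := by omega
      have hr1 : 1 ≤ r := by omega
      have : 0 ≤ (p - 1) * (r - 1) := mul_nonneg (by omega) (by omega)
      nlinarith
  by_cases hP : p = 0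
  · exfalso
    subst hP
    have h4 : (q - 2) * (r - 2) = 4 := by linear_combination heq'
    have := factor4 q r M hq hr (by omega) h4
    omega
  have hp1 : 1 ≤ p := by omega
  have hq1 : 1 ≤ q := by omega
  have hr1 : 1 ≤ r := by omega
  have key : q * (p + r - 2) = 2*(p + r) - 4*(p*r) := by linear_combination heq'
  have hprod : 0 ≤ (p - 1) * (r - 1) := mul_nonneg (by omega) (by omega)
  have hpr2 : p + r = 2 := by nlinarith
  have hpe : p = 1 := by omega
  have hre : r = 1 := by omega
  constructor <;> omega
open Finset

variable {N : ℕ}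

def phiA (N : ℕ) (p : Fin N × Fin N) : Fin N → ℤ :=
  fun t => if t = p.1 then 1 else if t = p.2 then -1 else 0
def phiB (N : ℕ) (i : Fin N) : Fin N → ℤ := fun t => if t = i then 2 else 1
def phiC (N : ℕ) (i : Fin N) : Fin N → ℤ := fun t => if t = i then -2 else -1

def FF (N : ℕ) : Finset (Fin N → ℤ) :=
  (Finset.univ.offDiag).image (phiA N) ∪ Finset.univ.image (phiB N)
    ∪ Finset.univ.image (phiC N)

lemma sum_if_eq (i : Fin N) (a b : ℤ) :
    ∑ t, (if t = i then a else b) = (N : ℤ) * b + (a - b) := by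
  have h : ∀ t : Fin N, (if t = i then a else b) = b + (if t = i then a - b else 0) := by
    intro t; split_ifs <;> ring
  rw [Finset.sum_congr rfl (fun t _ => h t), Finset.sum_add_distrib, Finset.sum_const,
    Finset.sum_ite_eq' Finset.univ i (fun _ => a - b), if_pos (Finset.mem_univ i),
    Finset.card_univ, Fintype.card_fin, nsmul_eq_mul]

lemma sum_if_pair (i j : Fin N) (hij : i ≠ j) (a b : ℤ) :
    ∑ t, (if t = i then a else if t = j then b else 0) = a + b := by
  have h : ∀ t : Fin N, (if t = i then a else if t = j then b else 0)
      = (if t = i then a else 0) + (if t = j then b else 0) := by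
    intro t
    split_ifs with h1 h2 <;> first | ring1 | (exfalso; exact hij (h1 ▸ h2 ▸ rfl : i = j))
  rw [Finset.sum_congr rfl (fun t _ => h t), Finset.sum_add_distrib,
    Finset.sum_ite_eq' Finset.univ i (fun _ => a), Finset.sum_ite_eq' Finset.univ j (fun _ => b),
    if_pos (Finset.mem_univ i), if_pos (Finset.mem_univ j)]

lemma sum_phiA (p : Fin N × Fin N) (hp : p.1 ≠ p.2) : ∑ t, phiA N p t = 0 := by
  unfold phiA; rw [sum_if_pair p.1 p.2 hp 1 (-1)]; ring
lemma sumsq_phiA (p : Fin N × Fin N) (hp : p.1 ≠ p.2) : ∑ t, (phiA N p t)^2 = 2 := by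
  have h : ∀ t, (phiA N p t)^2 = (if t = p.1 then 1 else if t = p.2 then 1 else 0) := by
    intro t; unfold phiA; split_ifs <;> norm_num
  rw [Finset.sum_congr rfl (fun t _ => h t), sum_if_pair p.1 p.2 hp 1 1]; ring
lemma sum_phiB (i : Fin N) : ∑ t, phiB N i t = (N : ℤ) + 1 := by
  unfold phiB; rw [sum_if_eq i 2 1]; ring
lemma sumsq_phiB (i : Fin N) : ∑ t, (phiB N i t)^2 = (N : ℤ) + 3 := by
  have h : ∀ t, (phiB N i t)^2 = (if t = i then (4:ℤ) else 1) := by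
    intro t; unfold phiB; split_ifs <;> norm_num
  rw [Finset.sum_congr rfl (fun t _ => h t), sum_if_eq i 4 1]; ring
lemma sum_phiC (i : Fin N) : ∑ t, phiC N i t = -((N : ℤ) + 1) := by
  unfold phiC; rw [sum_if_eq i (-2) (-1)]; ring
lemma sumsq_phiC (i : Fin N) : ∑ t, (phiC N i t)^2 = (N : ℤ) + 3 := by
  have h : ∀ t, (phiC N i t)^2 = (if t = i then (4:ℤ) else 1) := by
    intro t; unfold phiC; split_ifs <;> norm_num
  rw [Finset.sum_congr rfl (fun t _ => h t), sum_if_eq i 4 1]; ring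

lemma easy_incl (f : Fin N → ℤ) (hf : f ∈ FF N) :
    ((N:ℤ)+1) * (∑ i, (f i)^2) - (∑ i, f i)^2 = 2*((N:ℤ)+1) := by
  simp only [FF, Finset.mem_union, Finset.mem_image] at hf
  rcases hf with (⟨p, hp, rfl⟩ | ⟨i, _, rfl⟩) | ⟨i, _, rfl⟩
  · have hp12 : p.1 ≠ p.2 := (Finset.mem_offDiag.mp hp).2.2
    rw [sum_phiA p hp12, sumsq_phiA p hp12]; ring
  · rw [sum_phiB i, sumsq_phiB i]; ring
  · rw [sum_phiC i, sumsq_phiC i]; ring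

lemma sum_mem_FF (f : Fin N → ℤ) (hf : f ∈ FF N) :
    ∑ t, f t = 0 ∨ ∑ t, f t = (N:ℤ)+1 ∨ ∑ t, f t = -((N:ℤ)+1) := by
  simp only [FF, Finset.mem_union, Finset.mem_image] at hf
  rcases hf with (⟨p, hp, rfl⟩ | ⟨i, _, rfl⟩) | ⟨i, _, rfl⟩
  · exact Or.inl (sum_phiA p (Finset.mem_offDiag.mp hp).2.2)
  · exact Or.inr (Or.inl (sum_phiB i))
  · exact Or.inr (Or.inr (sum_phiC i))

lemma card_FF (N : ℕ) : (FF N).card = (N+1) * N := by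
  have hA : ((Finset.univ.offDiag : Finset (Fin N × Fin N)).image (phiA N)).card = N * N - N := by
    rw [Finset.card_image_of_injOn, Finset.offDiag_card, Finset.card_univ, Fintype.card_fin]
    intro p hp q hq h
    have hp12 : p.1 ≠ p.2 := (Finset.mem_offDiag.mp hp).2.2
    have hq12 : q.1 ≠ q.2 := (Finset.mem_offDiag.mp hq).2.2
    have h1 := congrFun h p.1
    have h2 := congrFun h p.2
    simp only [phiA] at h1 h2
    rw [if_pos trivial] at h1
    rw [if_neg (Ne.symm hp12), if_pos trivial] at h2
    have e1 : p.1 = q.1 := by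
      by_contra hne
      rw [if_neg hne] at h1
      split_ifs at h1 <;> norm_num at h1
    have e2 : p.2 = q.2 := by
      by_contra hne
      rcases Decidable.eq_or_ne p.2 q.1 with he | he
      · rw [if_pos he] at h2; norm_num at h2
      · rw [if_neg he, if_neg hne] at h2; norm_num at h2
    exact Prod.ext e1 e2
  have hB : ((Finset.univ : Finset (Fin N)).image (phiB N)).card = N := by
    rw [Finset.card_image_of_injOn, Finset.card_univ, Fintype.card_fin]
    intro i _ j _ h
    have h1 := congrFun h i
    simp only [phiB, if_pos rfl] at h1
    by_contra hne
    rw [if_neg hne] at h1; norm_num at h1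
  have hC : ((Finset.univ : Finset (Fin N)).image (phiC N)).card = N := by
    rw [Finset.card_image_of_injOn, Finset.card_univ, Fintype.card_fin]
    intro i _ j _ h
    have h1 := congrFun h i
    simp only [phiC, if_pos rfl] at h1
    by_contra hne
    rw [if_neg hne] at h1; norm_num at h1
  have dAB : Disjoint ((Finset.univ.offDiag : Finset (Fin N × Fin N)).image (phiA N))
      ((Finset.univ : Finset (Fin N)).image (phiB N)) := by
    rw [Finset.disjoint_left]
    rintro f hfA hfB
    obtain ⟨p, hp, rfl⟩ := Finset.mem_image.mp hfA
    obtain ⟨i, _, hi⟩ := Finset.mem_image.mp hfB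
    have h1 := sum_phiA p (Finset.mem_offDiag.mp hp).2.2
    have h2 := sum_phiB i
    rw [hi] at h2
    rw [h1] at h2
    have : (0:ℤ) < (N:ℤ) + 1 := by positivity
    omega
  have dABC : Disjoint ((Finset.univ.offDiag : Finset (Fin N × Fin N)).image (phiA N)
      ∪ (Finset.univ : Finset (Fin N)).image (phiB N))
      ((Finset.univ : Finset (Fin N)).image (phiC N)) := by
    rw [Finset.disjoint_left]
    rintro f hfAB hfC
    obtain ⟨i, _, hi⟩ := Finset.mem_image.mp hfC
    have h2 := sum_phiC i
    rw [hi] at h2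
    have : (0:ℤ) < (N:ℤ) + 1 := by positivity
    rcases Finset.mem_union.mp hfAB with hfA | hfB
    · obtain ⟨p, hp, rfl⟩ := Finset.mem_image.mp hfA
      have h1 := sum_phiA p (Finset.mem_offDiag.mp hp).2.2
      omega
    · obtain ⟨j, _, hj⟩ := Finset.mem_image.mp hfB
      have h1 := sum_phiB j
      rw [hj] at h1
      omega
  rw [FF, Finset.card_union_of_disjoint dABC, Finset.card_union_of_disjoint dAB, hA, hB, hC]
  cases N with
  | zero => rfl
  | succ n => ring_nf; omega

lemma hard_incl {N : ℕ} (hN : 2 ≤ N) (h8 : N + 1 ≠ 8) (h9 : N + 1 ≠ 9) (k : Fin N → ℤ)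
    (hk : ((N:ℤ)+1) * (∑ i, (k i)^2) - (∑ i, k i)^2 = 2*((N:ℤ)+1)) : k ∈ FF N := by
  set K : Fin (N+1) → ℤ := Fin.snoc k 0 with hK
  have hKc : ∀ t : Fin N, K (Fin.castSucc t) = k t := fun t => by
    rw [hK]; exact Fin.snoc_castSucc _ _ _
  have hKl : K (Fin.last N) = 0 := by rw [hK]; exact Fin.snoc_last _ _
  have hs : ∑ i, K i = ∑ t, k t := by
    rw [Fin.sum_univ_castSucc, hKl, add_zero]
    exact Finset.sum_congr rfl fun t _ => hKc t
  have hsq : ∑ i, (K i)^2 = ∑ t, (k t)^2 := by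
    rw [Fin.sum_univ_castSucc, hKl]
    norm_num
    exact Finset.sum_congr rfl fun t _ => by rw [hKc t]
  have hdouble : ∑ i, ∑ j, (K i - K j)^2 = 4 * ((N:ℤ)+1) := by
    rw [sum_sub_sq K, hs, hsq]
    push_cast
    linear_combination 2 * hk
  have hspread := spread (Nat.succ_pos N) K (by rw [hdouble]; push_cast; ring)
  obtain ⟨m, hw⟩ := hspread
  obtain ⟨hsK, hsqK⟩ := sum_eq K m hw
  set q : ℕ := (univ.filter fun i => K i = m+1).card with hqdef
  set r : ℕ := (univ.filter fun i => K i = m+2).card with hrdef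
  have hdisj : Disjoint (univ.filter fun i => K i = m+1) (univ.filter fun i => K i = m+2) := by
    rw [Finset.disjoint_left]
    intro i h1 h2
    simp only [Finset.mem_filter] at h1 h2
    omega
  have hqr : q + r ≤ N + 1 := by
    rw [hqdef, hrdef, ← Finset.card_union_of_disjoint hdisj]
    calc _ ≤ (Finset.univ : Finset (Fin (N+1))).card := Finset.card_le_card (Finset.subset_univ _)
    _ = N + 1 := by rw [Finset.card_univ, Fintype.card_fin]
  have hkK : ((N:ℤ)+1) * (∑ i, (K i)^2) - (∑ i, K i)^2 = 2*((N:ℤ)+1) := by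
    rw [hs, hsq]; exact hk
  have heq2 : ((N:ℤ)+1)*(q:ℤ) + 4*((N:ℤ)+1)*(r:ℤ) - ((q:ℤ)+2*(r:ℤ))^2 = 2*((N:ℤ)+1) := by
    rw [hsK, hsqK] at hkK
    push_cast at hkK ⊢
    linear_combination hkK
  obtain ⟨hqv', hrv'⟩ := dioph ((N:ℤ)+1) (q:ℤ) (r:ℤ) (by omega) (by omega) (by omega)
    (by positivity) (by positivity) (by exact_mod_cast hqr) heq2
  have hqv : q = N - 1 := by omega
  have hrv : r = 1 := by omega
  -- partition: count of K i = m is 1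
  have hcover : ∀ i, K i = m ∨ K i = m+1 ∨ K i = m+2 := fun i => by have := hw i; omega
  have hdisj2 : Disjoint (univ.filter fun i => K i = m)
      ((univ.filter fun i => K i = m+1) ∪ (univ.filter fun i => K i = m+2)) := by
    rw [Finset.disjoint_left]
    intro i h1 h2
    simp only [Finset.mem_union, Finset.mem_filter] at h1 h2
    omega
  have hunion : (univ.filter fun i => K i = m)
      ∪ ((univ.filter fun i => K i = m+1) ∪ (univ.filter fun i => K i = m+2)) = univ := by
    ext i
    simp only [Finset.mem_union, Finset.mem_filter, Finset.mem_univ, true_and, iff_true]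
    exact hcover i
  have hp1 : (univ.filter fun i => K i = m).card = 1 := by
    have := congrArg Finset.card hunion
    rw [Finset.card_union_of_disjoint hdisj2, Finset.card_union_of_disjoint hdisj,
      Finset.card_univ, Fintype.card_fin] at this
    omega
  have hr1 : (univ.filter fun i => K i = m+2).card = 1 := hrv
  obtain ⟨a0, ha0⟩ := Finset.card_eq_one.mp hp1
  obtain ⟨a2, ha2⟩ := Finset.card_eq_one.mp hr1
  have ha0K : K a0 = m := by
    have : a0 ∈ univ.filter fun i => K i = m := ha0 ▸ Finset.mem_singleton_self a0
    exact (Finset.mem_filter.mp this).2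
  have ha2K : K a2 = m + 2 := by
    have : a2 ∈ univ.filter fun i => K i = m+2 := ha2 ▸ Finset.mem_singleton_self a2
    exact (Finset.mem_filter.mp this).2
  have hmem0 : ∀ i, K i = m → i = a0 := by
    intro i hi
    have : i ∈ univ.filter fun j => K j = m := Finset.mem_filter.mpr ⟨Finset.mem_univ i, hi⟩
    rw [ha0] at this
    exact Finset.mem_singleton.mp this
  have hmem2 : ∀ i, K i = m + 2 → i = a2 := by
    intro i hi
    have : i ∈ univ.filter fun j => K j = m+2 := Finset.mem_filter.mpr ⟨Finset.mem_univ i, hi⟩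
    rw [ha2] at this
    exact Finset.mem_singleton.mp this
  have hm : m = 0 ∨ m = -1 ∨ m = -2 := by have := hw (Fin.last N); rw [hKl] at this; omega
  rw [FF]
  rcases hm with hm0 | hm1 | hm2
  · -- m = 0 : k = phiB i
    subst hm0
    have hlast0 : Fin.last N = a0 := hmem0 _ hKl
    have ha2ne : a2 ≠ Fin.last N := by
      intro h; rw [h, hKl] at ha2K; omega
    obtain ⟨i, hi⟩ := Fin.exists_castSucc_eq.mpr ha2ne
    refine Finset.mem_union.mpr (Or.inl (Finset.mem_union.mpr (Or.inr ?_)))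
    refine Finset.mem_image.mpr ⟨i, Finset.mem_univ i, ?_⟩
    funext t
    show phiB N i t = k t
    rw [← hKc t]
    unfold phiB
    by_cases ht : t = i
    · rw [if_pos ht, ht, hi, ha2K]; norm_num
    · rw [if_neg ht]
      rcases hcover (Fin.castSucc t) with h | h | h
      · exfalso
        have := hmem0 _ h
        rw [← hlast0] at this
        exact (Fin.castSucc_lt_last t).ne this
      · omega
      · exfalso
        have := hmem2 _ h
        rw [← hi] at this
        exact ht (Fin.castSucc_injective N this)
  · -- m = -1 : k = phiA (i, j)
    subst hm1
    have ha2ne : a2 ≠ Fin.last N := by intro h; rw [h, hKl] at ha2K; omega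
    have ha0ne : a0 ≠ Fin.last N := by intro h; rw [h, hKl] at ha0K; omega
    obtain ⟨i, hi⟩ := Fin.exists_castSucc_eq.mpr ha2ne
    obtain ⟨j, hj⟩ := Fin.exists_castSucc_eq.mpr ha0ne
    have hij : i ≠ j := by
      intro h
      have he : a2 = a0 := by rw [← hi, ← hj, h]
      rw [he, ha0K] at ha2K
      omega
    refine Finset.mem_union.mpr (Or.inl (Finset.mem_union.mpr (Or.inl ?_)))
    refine Finset.mem_image.mpr ⟨(i, j), Finset.mem_offDiag.mpr ⟨Finset.mem_univ _, Finset.mem_univ _, hij⟩, ?_⟩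
    funext t
    show phiA N (i, j) t = k t
    rw [← hKc t]
    unfold phiA
    by_cases ht : t = i
    · rw [if_pos ht, ht, hi, ha2K]; ring
    · rw [if_neg ht]
      by_cases ht2 : t = j
      · rw [if_pos ht2, ht2, hj, ha0K]
      · rw [if_neg ht2]
        rcases hcover (Fin.castSucc t) with h | h | h
        · exfalso
          have h0 := hmem0 _ h
          rw [← hj] at h0
          exact ht2 (Fin.castSucc_injective N h0)
        · omega
        · exfalso
          have h2' := hmem2 _ h
          rw [← hi] at h2'
          exact ht (Fin.castSucc_injective N h2')
  · -- m = -2 : k = phiC i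
    subst hm2
    have hlast2 : Fin.last N = a2 := hmem2 _ (by rw [hKl]; ring)
    have ha0ne : a0 ≠ Fin.last N := by intro h; rw [h, hKl] at ha0K; omega
    obtain ⟨i, hi⟩ := Fin.exists_castSucc_eq.mpr ha0ne
    refine Finset.mem_union.mpr (Or.inr ?_)
    refine Finset.mem_image.mpr ⟨i, Finset.mem_univ i, ?_⟩
    funext t
    show phiC N i t = k t
    rw [← hKc t]
    unfold phiC
    by_cases ht : t = i
    · rw [if_pos ht, ht, hi, ha0K]
    · rw [if_neg ht]
      rcases hcover (Fin.castSucc t) with h | h | h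
      · exfalso
        have := hmem0 _ h
        rw [← hi] at this
        exact ht (Fin.castSucc_injective N this)
      · omega
      · exfalso
        have := hmem2 _ h
        rw [← hlast2] at this
        exact (Fin.castSucc_lt_last t).ne this

lemma sols_finite (N : ℕ) :
    {k : Fin N → ℤ | ((N:ℤ)+1) * (∑ i, (k i)^2) - (∑ i, k i)^2 = 2*((N:ℤ)+1)}.Finite := by
  apply Set.Finite.subset
    (Set.Finite.pi (fun i : Fin N => Set.finite_Icc (-(2*(N:ℤ)+2)) (2*(N:ℤ)+2)))
  intro k hk
  simp only [Set.mem_setOf_eq] at hk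
  have hid := sum_sub_sq k
  have hnn : (0:ℤ) ≤ ∑ i, ∑ j, (k i - k j)^2 :=
    Finset.sum_nonneg fun i _ => Finset.sum_nonneg fun j _ => sq_nonneg _
  have ht : ∑ i, (k i)^2 ≤ 2*((N:ℤ)+1) := by nlinarith [sq_nonneg (∑ i, k i)]
  have hbound : ∀ i, (k i)^2 ≤ 2*((N:ℤ)+1) := by
    intro i
    have h1 : (k i)^2 ≤ ∑ j, (k j)^2 :=
      Finset.single_le_sum (fun j _ => sq_nonneg (k j)) (Finset.mem_univ i)
    linarith
  simp only [Set.mem_pi, Set.mem_univ, forall_true_left, Set.mem_Icc]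
  intro i
  have := hbound i
  constructor <;> nlinarith [sq_nonneg (k i + (2*(N:ℤ)+2)), sq_nonneg (k i - (2*(N:ℤ)+2))]

lemma main1 (N : ℕ) (hN : 2 ≤ N) (h8 : N + 1 ≠ 8) (h9 : N + 1 ≠ 9) :
    {k : Fin N → ℤ | ((N:ℤ)+1) * (∑ i, (k i)^2) - (∑ i, k i)^2 = 2*((N:ℤ)+1)}.ncard
      = (N+1) * N := by
  have hset : {k : Fin N → ℤ | ((N:ℤ)+1) * (∑ i, (k i)^2) - (∑ i, k i)^2 = 2*((N:ℤ)+1)}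
      = ↑(FF N) := by
    ext f
    simp only [Set.mem_setOf_eq, Finset.mem_coe]
    exact ⟨fun h => hard_incl hN h8 h9 f h, fun h => easy_incl f h⟩
  rw [hset, Set.ncard_coe_finset, card_FF]

theorem stmt_8 :
    (∀ n : ℕ, 3 ≤ n → n ≠ 8 → n ≠ 9 →
      {k : Fin (n - 1) → ℤ |
        (n : ℤ) * (∑ i, (k i) ^ 2) - (∑ i, k i) ^ 2 = 2 * (n : ℤ)}.ncard = n * (n - 1)) ∧
    ({k : Fin (8 - 1) → ℤ |
        (8 : ℤ) * (∑ i, (k i) ^ 2) - (∑ i, k i) ^ 2 = 2 * (8 : ℤ)}.ncard > 8 * (8 - 1)) ∧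
    ({k : Fin (9 - 1) → ℤ |
        (9 : ℤ) * (∑ i, (k i) ^ 2) - (∑ i, k i) ^ 2 = 2 * (9 : ℤ)}.ncard > 9 * (9 - 1)) := by
  refine ⟨?_, ?_, ?_⟩
  · intro n h3 h8 h9
    obtain ⟨N, rfl⟩ : ∃ N, n = N + 1 := ⟨n - 1, by omega⟩
    have key := main1 N (by omega) h8 h9
    have hcast : ((N+1 : ℕ) : ℤ) = (N:ℤ)+1 := by push_cast; ring
    simp only [Nat.add_sub_cancel]
    rw [show ((N+1 : ℕ) : ℤ) = (N:ℤ)+1 from hcast]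
    exact key
  · have hEq : {k : Fin (8 - 1) → ℤ |
        (8 : ℤ) * (∑ i, (k i) ^ 2) - (∑ i, k i) ^ 2 = 2 * (8 : ℤ)}
        = {k : Fin 7 → ℤ | ((7:ℤ)+1) * (∑ i, (k i)^2) - (∑ i, k i)^2 = 2*((7:ℤ)+1)} := by
      ext k
      simp only [Set.mem_setOf_eq]
      norm_num
    have he : (fun t : Fin 7 => if (t:ℕ) < 4 then (1:ℤ) else 0) ∈
        {k : Fin 7 → ℤ | ((7:ℤ)+1) * (∑ i, (k i)^2) - (∑ i, k i)^2 = 2*((7:ℤ)+1)} := by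
      simp only [Set.mem_setOf_eq]
      rw [Fin.sum_univ_seven, Fin.sum_univ_seven]
      decide
    have hsum : ∑ t : Fin 7, (if (t:ℕ) < 4 then (1:ℤ) else 0) = 4 := by
      rw [Fin.sum_univ_seven]; decide
    have hnotin : (fun t : Fin 7 => if (t:ℕ) < 4 then (1:ℤ) else 0) ∉ FF 7 := by
      intro h
      have := sum_mem_FF _ h
      rw [hsum] at this
      norm_num at this
    have hsub : ↑(insert (fun t : Fin 7 => if (t:ℕ) < 4 then (1:ℤ) else 0) (FF 7)) ⊆
        {k : Fin 7 → ℤ | ((7:ℤ)+1) * (∑ i, (k i)^2) - (∑ i, k i)^2 = 2*((7:ℤ)+1)} := by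
      intro f hf
      rcases Finset.mem_insert.mp hf with rfl | hf2
      · exact he
      · have := easy_incl f hf2
        simp only [Set.mem_setOf_eq]
        push_cast at this ⊢
        linarith
    have hcard : (insert (fun t : Fin 7 => if (t:ℕ) < 4 then (1:ℤ) else 0) (FF 7)).card = 57 := by
      rw [Finset.card_insert_of_notMem hnotin, card_FF]
    have hge : 57 ≤ {k : Fin 7 → ℤ |
        ((7:ℤ)+1) * (∑ i, (k i)^2) - (∑ i, k i)^2 = 2*((7:ℤ)+1)}.ncard := by
      rw [← hcard, ← Set.ncard_coe_finset]
      refine Set.ncard_le_ncard hsub ?_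
      have := sols_finite 7
      push_cast at this
      exact this
    have hEq' := congrArg Set.ncard hEq
    rw [hEq']
    exact lt_of_lt_of_le (by norm_num) hge
  · have hEq : {k : Fin (9 - 1) → ℤ |
        (9 : ℤ) * (∑ i, (k i) ^ 2) - (∑ i, k i) ^ 2 = 2 * (9 : ℤ)}
        = {k : Fin 8 → ℤ | ((8:ℤ)+1) * (∑ i, (k i)^2) - (∑ i, k i)^2 = 2*((8:ℤ)+1)} := by
      ext k
      simp only [Set.mem_setOf_eq]
      norm_num
    have he : (fun t : Fin 8 => if (t:ℕ) < 6 then (1:ℤ) else 0) ∈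
        {k : Fin 8 → ℤ | ((8:ℤ)+1) * (∑ i, (k i)^2) - (∑ i, k i)^2 = 2*((8:ℤ)+1)} := by
      simp only [Set.mem_setOf_eq]
      rw [Fin.sum_univ_eight, Fin.sum_univ_eight]
      decide
    have hsum : ∑ t : Fin 8, (if (t:ℕ) < 6 then (1:ℤ) else 0) = 6 := by
      rw [Fin.sum_univ_eight]; decide
    have hnotin : (fun t : Fin 8 => if (t:ℕ) < 6 then (1:ℤ) else 0) ∉ FF 8 := by
      intro h
      have := sum_mem_FF _ h
      rw [hsum] at this
      norm_num at this
    have hsub : ↑(insert (fun t : Fin 8 => if (t:ℕ) < 6 then (1:ℤ) else 0) (FF 8)) ⊆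
        {k : Fin 8 → ℤ | ((8:ℤ)+1) * (∑ i, (k i)^2) - (∑ i, k i)^2 = 2*((8:ℤ)+1)} := by
      intro f hf
      rcases Finset.mem_insert.mp hf with rfl | hf2
      · exact he
      · have := easy_incl f hf2
        simp only [Set.mem_setOf_eq]
        push_cast at this ⊢
        linarith
    have hcard : (insert (fun t : Fin 8 => if (t:ℕ) < 6 then (1:ℤ) else 0) (FF 8)).card = 73 := by
      rw [Finset.card_insert_of_notMem hnotin, card_FF]
    have hge : 73 ≤ {k : Fin 8 → ℤ |
        ((8:ℤ)+1) * (∑ i, (k i)^2) - (∑ i, k i)^2 = 2*((8:ℤ)+1)}.ncard := by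
      rw [← hcard, ← Set.ncard_coe_finset]
      refine Set.ncard_le_ncard hsub ?_
      have := sols_finite 8
      push_cast at this
      exact this
    have hEq' := congrArg Set.ncard hEq
    rw [hEq']
    exact lt_of_lt_of_le (by norm_num) hge
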